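/- Γ and Λ restrict to mutually inverse equivalences between T and T^⊥⊥ (Theorem 2.5(3) of the paper, stated objectwise): (i) Suppose X ∈ T, let ΔX → X → ΛX → ΔX⟦1⟧ be a completion decomposition of X, and let Γ' → ΛX → L' → Γ'⟦1⟧ be a torsion decomposition of ΛX. Then the morphism X → ΛX factors uniquely through the morphism Γ' → ΛX, and the resulting morphism X → Γ' is an isomorphism. (ii) Suppose Y ∈ T^⊥⊥, let ΓY → Y → LY → ΓY⟦1⟧ be a torsion decomposition of Y, and let Δ' → ΓY → Λ' → Δ'⟦1⟧ be a completion decomposition of ΓY. Then there is a unique morphism Λ' → Y whose composite with ΓY → Λ' equals the morphism ΓY → Y, and this morphism Λ' → Y is an isomorphism. -/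

import Mathlib

open CategoryTheory CategoryTheory.Limits CategoryTheory.Pretriangulated

universe v u

variable {C : Type u} [Category.{v} C] [HasZeroObject C] [HasShift C ℤ]
  [Preadditive C] [∀ n : ℤ, (shiftFunctor C n).Additive] [Pretriangulated C]

/-- The orthogonal `T^⊥` of a class of objects `T`: all objects `Y` such that every
morphism `X⟦n⟧ ⟶ Y` with `X ∈ T` is zero. -/
def orth (T : Set C) : Set C :=
  {Y | ∀ X ∈ T, ∀ n : ℤ, ∀ f : X⟦n⟧ ⟶ Y, f = 0}

/-- A triangulated subcategory of `C`, given as a class of objects containing the zero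
objects, closed under isomorphism, shifts, and extensions. -/
structure TriangulatedSub (C : Type u) [Category.{v} C] [HasZeroObject C] [HasShift C ℤ]
    [Preadditive C] [∀ n : ℤ, (shiftFunctor C n).Additive] [Pretriangulated C] where
  P : Set C
  zero_mem : ∀ X : C, IsZero X → X ∈ P
  iso_closed : ∀ ⦃X Y : C⦄, (X ≅ Y) → X ∈ P → Y ∈ P
  shift_closed : ∀ (X : C) (n : ℤ), X ∈ P → X⟦n⟧ ∈ P
  ext_closed : ∀ (Tr : Triangle C), (Tr ∈ distTriang C) → Tr.obj₁ ∈ P → Tr.obj₃ ∈ P → Tr.obj₂ ∈ P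

lemma orth_shift (S : Set C) {Y : C} (hY : Y ∈ orth S) (m : ℤ) : (Y⟦m⟧ : C) ∈ orth S := by
  intro X hX n f
  have hg : (shiftFunctorAdd' C n (-m) (n + -m) rfl).hom.app X ≫
      (shiftFunctor C (-m)).map f ≫
      (shiftFunctorCompIsoId C m (-m) (by omega)).hom.app Y = 0 :=
    hY X hX (n + -m) _
  apply (shiftFunctor C (-m)).map_injective
  simp only [Functor.map_zero]
  rw [← cancel_epi ((shiftFunctorAdd' C n (-m) (n + -m) rfl).hom.app X),
    ← cancel_mono ((shiftFunctorCompIsoId C m (-m) (by omega)).hom.app Y)]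
  simpa using hg

lemma hom_orth_zero (S : Set C) {X Y : C} (hX : X ∈ S) (hY : Y ∈ orth S) (f : X ⟶ Y) :
    f = 0 := by
  have h0 := hY X hX 0 ((shiftFunctorZero C ℤ).hom.app X ≫ f)
  rw [← cancel_epi ((shiftFunctorZero C ℤ).hom.app X), comp_zero]
  exact h0

/-- `Γ` and `Λ` restrict to mutually inverse equivalences between `T` and `T^⊥⊥`
(objectwise): (i) for `X ∈ T`, the map `X ⟶ ΛX` factors uniquely through the torsion part
`Γ'` of `ΛX`, and the factorization `X ⟶ Γ'` is an isomorphism; (ii) for `Y ∈ T^⊥⊥`, the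
map `ΓY ⟶ Y` factors uniquely through the completion `Λ'` of `ΓY`, and the factorization
`Λ' ⟶ Y` is an isomorphism. -/
theorem gamma_lambda_equivalence (T : TriangulatedSub C)
    -- (i): data for `X ∈ T`
    (X : C) (hX : X ∈ T.P)
    (ΔX ΛX : C) (d : ΔX ⟶ X) (e : X ⟶ ΛX) (f : ΛX ⟶ ΔX⟦(1 : ℤ)⟧)
    (hXdt : Triangle.mk d e f ∈ distTriang C) (hΔX : ΔX ∈ orth T.P)
    (hΛX : ΛX ∈ orth (orth T.P))
    (Γ' L' : C) (g : Γ' ⟶ ΛX) (h : ΛX ⟶ L') (k : L' ⟶ Γ'⟦(1 : ℤ)⟧)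
    (hΛdt : Triangle.mk g h k ∈ distTriang C) (hΓ' : Γ' ∈ T.P) (hL' : L' ∈ orth T.P)
    -- (ii): data for `Y ∈ T^⊥⊥`
    (Y : C) (hY : Y ∈ orth (orth T.P))
    (ΓY LY : C) (a : ΓY ⟶ Y) (b : Y ⟶ LY) (c : LY ⟶ ΓY⟦(1 : ℤ)⟧)
    (hYdt : Triangle.mk a b c ∈ distTriang C) (hΓY : ΓY ∈ T.P) (hLY : LY ∈ orth T.P)
    (Δ' Λ' : C) (d' : Δ' ⟶ ΓY) (e' : ΓY ⟶ Λ') (f' : Λ' ⟶ Δ'⟦(1 : ℤ)⟧)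
    (hΓdt : Triangle.mk d' e' f' ∈ distTriang C) (hΔ' : Δ' ∈ orth T.P)
    (hΛ' : Λ' ∈ orth (orth T.P)) :
    ((∃! u : X ⟶ Γ', u ≫ g = e) ∧ (∀ u : X ⟶ Γ', u ≫ g = e → IsIso u)) ∧
    ((∃! v : Λ' ⟶ Y, e' ≫ v = a) ∧ (∀ v : Λ' ⟶ Y, e' ≫ v = a → IsIso v)) := by
  have hz : ∀ {P Q : C}, P ∈ T.P → Q ∈ orth T.P → ∀ φ : P ⟶ Q, φ = 0 :=
    fun hP hQ φ => hom_orth_zero T.P hP hQ φ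
  have hz2 : ∀ {P Q : C}, P ∈ orth T.P → Q ∈ orth (orth T.P) → ∀ φ : P ⟶ Q, φ = 0 :=
    fun hP hQ φ => hom_orth_zero (orth T.P) hP hQ φ
  constructor
  · -- Part (i)
    -- injectivity of (· ≫ g) on Hom(B, Γ') for B ∈ T
    have injg : ∀ {B : C}, B ∈ T.P → ∀ s : B ⟶ Γ', s ≫ g = 0 → s = 0 := by
      intro B hB s hs
      obtain ⟨w, hw⟩ := Triangle.coyoneda_exact₂ _ (inv_rot_of_distTriang _ hΛdt) s hs
      rw [hw, hz hB (orth_shift T.P hL' (-1)) w]; exact zero_comp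
    -- injectivity of (· ≫ e) on Hom(B, X) for B ∈ T
    have inje : ∀ {B : C}, B ∈ T.P → ∀ s : B ⟶ X, s ≫ e = 0 → s = 0 := by
      intro B hB s hs
      obtain ⟨w, hw⟩ := Triangle.coyoneda_exact₂ _ hXdt s hs
      rw [hw, hz hB hΔX w]; exact zero_comp
    -- surjectivity of (· ≫ e) : Hom(B, X) → Hom(B, ΛX) for B ∈ T
    have surje : ∀ {B : C}, B ∈ T.P → ∀ t : B ⟶ ΛX, ∃ s : B ⟶ X, s ≫ e = t := by
      intro B hB t
      obtain ⟨s, hs⟩ := Triangle.coyoneda_exact₃ _ hXdt t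
        (hz hB (orth_shift T.P hΔX 1) (t ≫ f))
      exact ⟨s, hs.symm⟩
    -- existence of the factorization u
    obtain ⟨u₀, hu₀⟩ : ∃ u₀ : X ⟶ Γ', e = u₀ ≫ g :=
      Triangle.coyoneda_exact₂ _ hΛdt e (hz hX hL' (e ≫ h))
    have huniq : ∀ u : X ⟶ Γ', u ≫ g = e → u = u₀ := by
      intro u hu
      have : (u - u₀) ≫ g = 0 := by
        rw [Preadditive.sub_comp, hu, ← hu₀, sub_self]
      have := injg hX _ this
      rw [← sub_eq_zero]; exact this
    refine ⟨⟨u₀, hu₀.symm, huniq⟩, ?_⟩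
    intro u hu
    obtain ⟨v, hv⟩ := surje hΓ' g
    have hvu : v ≫ u = 𝟙 Γ' := by
      rw [← sub_eq_zero]
      apply injg hΓ'
      rw [Preadditive.sub_comp, Category.assoc, hu, hv, Category.id_comp, sub_self]
    have huv : u ≫ v = 𝟙 X := by
      rw [← sub_eq_zero]
      apply inje hX
      rw [Preadditive.sub_comp, Category.assoc, hv, hu, Category.id_comp, sub_self]
    exact ⟨v, huv, hvu⟩
  · -- Part (ii)
    -- injectivity of (e' ≫ ·) on Hom(Λ', Z) for Z ∈ T^⊥⊥
    have inje' : ∀ {Z : C}, Z ∈ orth (orth T.P) → ∀ s : Λ' ⟶ Z, e' ≫ s = 0 → s = 0 := by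
      intro Z hZ s hs
      obtain ⟨w, hw⟩ := Triangle.yoneda_exact₃ _ hΓdt s hs
      rw [hw, hz2 (orth_shift T.P hΔ' 1) hZ w]; exact comp_zero
    -- injectivity of (a ≫ ·) on Hom(Y, Z) for Z ∈ T^⊥⊥
    have inja : ∀ {Z : C}, Z ∈ orth (orth T.P) → ∀ s : Y ⟶ Z, a ≫ s = 0 → s = 0 := by
      intro Z hZ s hs
      obtain ⟨w, hw⟩ := Triangle.yoneda_exact₂ _ hYdt s hs
      rw [hw, hz2 hLY hZ w]; exact comp_zero
    -- surjectivity of (a ≫ ·) : Hom(Y, Z) → Hom(ΓY, Z) for Z ∈ T^⊥⊥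
    have surja : ∀ {Z : C}, Z ∈ orth (orth T.P) → ∀ t : ΓY ⟶ Z, ∃ s : Y ⟶ Z, a ≫ s = t := by
      intro Z hZ t
      obtain ⟨s, hs⟩ := Triangle.yoneda_exact₂ _ (inv_rot_of_distTriang _ hYdt) t
        (hz2 (orth_shift T.P hLY (-1)) hZ _)
      exact ⟨s, hs.symm⟩
    -- existence of the factorization v
    obtain ⟨v₀, hv₀⟩ : ∃ v₀ : Λ' ⟶ Y, a = e' ≫ v₀ :=
      Triangle.yoneda_exact₂ _ hΓdt a (hz2 hΔ' hY (d' ≫ a))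
    have hvuniq : ∀ v : Λ' ⟶ Y, e' ≫ v = a → v = v₀ := by
      intro v hv
      have : e' ≫ (v - v₀) = 0 := by
        rw [Preadditive.comp_sub, hv, ← hv₀, sub_self]
      have := inje' hY _ this
      rw [← sub_eq_zero]; exact this
    refine ⟨⟨v₀, hv₀.symm, hvuniq⟩, ?_⟩
    intro v hv
    obtain ⟨w, hw⟩ := surja hΛ' e'
    have hvw : v ≫ w = 𝟙 Λ' := by
      rw [← sub_eq_zero]
      apply inje' hΛ'
      rw [Preadditive.comp_sub, ← Category.assoc, hv, hw, Category.comp_id, sub_self]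
    have hwv : w ≫ v = 𝟙 Y := by
      rw [← sub_eq_zero]
      apply inja hY
      rw [Preadditive.comp_sub, ← Category.assoc, hw, hv, Category.comp_id, sub_self]
    exact ⟨w, hvw, hwv⟩
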